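/- Let $X_0$ and $X_1$ be perfect Polish spaces, suppose $X_0' \subseteq X_0$ is nowhere meager in $X_0$ and $X_1' \subseteq X_1$ is dense in $X_1$, let $r < \omega$ and let $\gamma : X_0' \times X_1' \to r$ be any coloring. Then there exist a color $j < r$, nonempty open sets $U_0 \subseteq X_0$, $U_1 \subseteq X_1$, a sequence $(x_n)_{n<\omega}$ of points of $X_0' \cap U_0$ that is dense in $U_0$, and a decreasing sequence $(Y_n)_{n<\omega}$ of subsets of $X_1' \cap U_1$ each dense in $U_1$, such that $\gamma(x_n, y) = j$ for all $n < \omega$ and all $y \in Y_{n+1}$. -/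

import Mathlib

open Set TopologicalSpace

lemma ddf_nonmeager_nonempty {X : Type} [TopologicalSpace X] {B : Set X}
    (hB : ¬ IsMeagre B) : B.Nonempty := by
  rcases B.eq_empty_or_nonempty with h | h
  · exact absurd (h ▸ IsMeagre.empty) hB
  · exact h

lemma ddf_meagre_union {X : Type} [TopologicalSpace X] {s t : Set X}
    (hs : IsMeagre s) (ht : IsMeagre t) : IsMeagre (s ∪ t) := by
  rw [IsMeagre, compl_union]
  exact Filter.inter_mem hs ht

/-- Localization: a non-meager set is nowhere meager in some nonempty open set. -/
lemma ddf_localize {X : Type} [TopologicalSpace X] [SecondCountableTopology X] [Nonempty X]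
    {B : Set X} (hB : ¬ IsMeagre B) :
    ∃ U : Set X, IsOpen U ∧ U.Nonempty ∧
      ∀ O : Set X, IsOpen O → O ⊆ U → O.Nonempty → ¬ IsMeagre (B ∩ O) := by
  classical
  obtain ⟨b, hbc, hbne, hb⟩ := exists_countable_basis X
  have hbnonempty : b.Nonempty := by
    obtain ⟨x⟩ := ‹Nonempty X›
    obtain ⟨t, ht, -, -⟩ := hb.exists_subset_of_mem_open (mem_univ x) isOpen_univ
    exact ⟨t, ht⟩
  obtain ⟨g, hg⟩ := hbc.exists_eq_range hbnonempty
  have hgb : ∀ n, g n ∈ b := fun n => hg ▸ mem_range_self n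
  set G : Set X := ⋃ n, if IsMeagre (B ∩ g n) then g n else ∅ with hGdef
  have hGopen : IsOpen G := by
    refine isOpen_iUnion fun n => ?_
    by_cases h : IsMeagre (B ∩ g n)
    · rw [if_pos h]; exact hb.isOpen (hgb n)
    · rw [if_neg h]; exact isOpen_empty
  have hBG : IsMeagre (B ∩ G) := by
    rw [hGdef, inter_iUnion]
    refine isMeagre_iUnion fun n => ?_
    by_cases h : IsMeagre (B ∩ g n)
    · rw [if_pos h]; exact h
    · rw [if_neg h, inter_empty]; exact IsMeagre.empty
  refine ⟨(closure G)ᶜ, isClosed_closure.isOpen_compl, ?_, ?_⟩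
  · by_contra hne
    rw [not_nonempty_iff_eq_empty, compl_empty_iff] at hne
    have hGd : Dense G := by rwa [dense_iff_closure_eq]
    have hGc : IsMeagre Gᶜ := by
      rw [IsMeagre, compl_compl]
      exact residual_of_dense_open hGopen hGd
    have : B ⊆ (B ∩ G) ∪ Gᶜ := by
      intro x hx
      by_cases hxG : x ∈ G
      · exact Or.inl ⟨hx, hxG⟩
      · exact Or.inr hxG
    exact hB ((ddf_meagre_union hBG hGc).mono this)
  · intro O hOopen hOU hOne hmeag
    obtain ⟨u, hu⟩ := hOne
    obtain ⟨t, htb, hut, htO⟩ := hb.exists_subset_of_mem_open hu hOopen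
    obtain ⟨n, hn⟩ : ∃ n, g n = t := by
      have : t ∈ range g := by rw [← hg]; exact htb
      exact this
    have hmn : IsMeagre (B ∩ g n) := by
      rw [hn]
      exact hmeag.mono (inter_subset_inter_right _ htO)
    have htG : t ⊆ G := by
      rw [← hn]
      exact subset_iUnion_of_subset n (by rw [if_pos hmn])
    have : u ∈ closure G := subset_closure (htG hut)
    exact (hOU hu) this

/-- `DDF₂` holds in ZFC (strengthened form): if `X₀'` is a nowhere meager subset of a
perfect Polish space `X₀` and `X₁'` is a dense subset of a perfect Polish space `X₁`,
then for any finite coloring `γ` of `X₀' × X₁'` there are a color `j`, nonempty open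
sets `U₀, U₁`, a sequence of points of `X₀' ∩ U₀` dense in `U₀`, and a decreasing
sequence of subsets of `X₁' ∩ U₁` each dense in `U₁`, witnessing a monochromatic
somewhere dense-by-dense-filter set of color `j`. -/
theorem stmt5 (X₀ X₁ : Type) [TopologicalSpace X₀] [TopologicalSpace X₁]
    [PolishSpace X₀] [PolishSpace X₁] [Nonempty X₀] [Nonempty X₁]
    (hperf₀ : Perfect (Set.univ : Set X₀)) (hperf₁ : Perfect (Set.univ : Set X₁))
    (X₀' : Set X₀) (h₀ : ∀ U : Set X₀, IsOpen U → U.Nonempty → ¬ IsMeagre (X₀' ∩ U))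
    (X₁' : Set X₁) (h₁ : Dense X₁')
    (r : ℕ) (γ : X₀ → X₁ → Fin r) :
    ∃ (j : Fin r) (U₀ : Set X₀) (U₁ : Set X₁) (x : ℕ → X₀) (Y : ℕ → Set X₁),
      IsOpen U₀ ∧ U₀.Nonempty ∧ IsOpen U₁ ∧ U₁.Nonempty ∧
      (∀ n, x n ∈ X₀' ∩ U₀) ∧ U₀ ⊆ closure (Set.range x) ∧
      (∀ n, Y n ⊆ X₁' ∩ U₁) ∧ (∀ n, Y (n + 1) ⊆ Y n) ∧
      (∀ n, U₁ ⊆ closure (Y n)) ∧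
      (∀ n, ∀ y ∈ Y (n + 1), γ (x n) y = j) := by
  -- basis of X₁
  obtain ⟨b₁, hb₁c, hb₁ne, hb₁⟩ := exists_countable_basis X₁
  have hb₁nonempty : b₁.Nonempty := by
    obtain ⟨p⟩ := ‹Nonempty X₁›
    obtain ⟨t, ht, -, -⟩ := hb₁.exists_subset_of_mem_open (mem_univ p) isOpen_univ
    exact ⟨t, ht⟩
  obtain ⟨g, hg⟩ := hb₁c.exists_eq_range hb₁nonempty
  have hgb : ∀ n, g n ∈ b₁ := fun n => hg ▸ mem_range_self n
  -- step 1: there is a "good" quintuple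
  have hgood : ∃ (j : Fin r) (U₀ : Set X₀) (U₁ : Set X₁) (A : Set X₀) (Z : Set X₁),
      IsOpen U₀ ∧ U₀.Nonempty ∧ IsOpen U₁ ∧ U₁.Nonempty ∧ A ⊆ X₀' ∧
      Z ⊆ X₁' ∩ U₁ ∧ U₁ ⊆ closure Z ∧
      (∀ V : Set X₀, IsOpen V → V.Nonempty → V ⊆ U₀ →
        ∀ Y : Set X₁, Y ⊆ Z → U₁ ⊆ closure Y →
          ∃ x, x ∈ A ∩ V ∧ U₁ ⊆ closure {y ∈ Y | γ x y = j}) := by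
    by_contra hng
    have key : ∀ k, k ≤ r → ∃ (U₀ : Set X₀) (U₁ : Set X₁) (A : Set X₀) (Z : Set X₁),
        IsOpen U₀ ∧ U₀.Nonempty ∧ IsOpen U₁ ∧ U₁.Nonempty ∧ A ⊆ X₀' ∧
        (∀ O : Set X₀, IsOpen O → O ⊆ U₀ → O.Nonempty → ¬ IsMeagre (A ∩ O)) ∧
        Z ⊆ X₁' ∩ U₁ ∧ U₁ ⊆ closure Z ∧
        (∀ x ∈ A, ∀ y ∈ Z, k ≤ (γ x y : ℕ)) := by
      intro k
      induction k with
      | zero =>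
        intro _
        refine ⟨univ, univ, X₀', X₁', isOpen_univ, univ_nonempty, isOpen_univ, univ_nonempty,
          subset_rfl, ?_, ?_, ?_, ?_⟩
        · intro O hO hOU hOne
          exact h₀ O hO hOne
        · simp
        · intro p _
          exact h₁ p
        · intro x _ y _
          exact Nat.zero_le _
      | succ k ih =>
        intro hk1
        have hk : k < r := hk1
        obtain ⟨U₀, U₁, A, Z, hU₀o, hU₀ne, hU₁o, hU₁ne, hAX, hAnm, hZX, hZd, hcol⟩ :=
          ih (Nat.le_of_succ_le hk1)
        -- this quintuple is not good
        have hsel : ¬ (∀ V : Set X₀, IsOpen V → V.Nonempty → V ⊆ U₀ →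
            ∀ Y : Set X₁, Y ⊆ Z → U₁ ⊆ closure Y →
              ∃ x, x ∈ A ∩ V ∧ U₁ ⊆ closure {y ∈ Y | γ x y = ⟨k, hk⟩}) := by
          intro hs
          exact hng ⟨⟨k, hk⟩, U₀, U₁, A, Z, hU₀o, hU₀ne, hU₁o, hU₁ne, hAX, hZX, hZd, hs⟩
        push_neg at hsel
        obtain ⟨V, hVo, hVne, hVU, Y, hYZ, hYd, hfail⟩ := hsel
        -- cover A ∩ V by countably many pieces
        set Bm : ℕ → Set X₀ := fun m =>
          {x | x ∈ A ∩ V ∧ g m ⊆ U₁ ∧ (g m).Nonempty ∧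
            ∀ y ∈ Y ∩ g m, γ x y ≠ ⟨k, hk⟩} with hBmdef
        have hcover : A ∩ V ⊆ ⋃ m, Bm m := by
          intro x hx
          have hnd := hfail x hx
          rw [Set.not_subset] at hnd
          obtain ⟨u, huU, hucl⟩ := hnd
          rw [mem_closure_iff] at hucl
          push_neg at hucl
          obtain ⟨N, hNo, huN, hNS⟩ := hucl
          obtain ⟨t, htb, hut, htNU⟩ :=
            hb₁.exists_subset_of_mem_open (⟨huN, huU⟩ : u ∈ N ∩ U₁) (hNo.inter hU₁o)
          obtain ⟨m, hm⟩ : ∃ m, g m = t := by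
            have : t ∈ range g := by rw [← hg]; exact htb
            exact this
          refine mem_iUnion.2 ⟨m, hx, ?_, ?_, ?_⟩
          · rw [hm]; exact htNU.trans inter_subset_right
          · rw [hm]; exact ⟨u, hut⟩
          · intro y hy hcy
            rw [hm] at hy
            have : y ∈ N ∩ {y ∈ Y | γ x y = ⟨k, hk⟩} :=
              ⟨(htNU hy.2).1, hy.1, hcy⟩
            rw [hNS] at this
            exact this
        have hAVnm : ¬ IsMeagre (A ∩ V) := hAnm V hVo hVU hVne
        have hBmnm : ∃ m, ¬ IsMeagre (Bm m) := by
          by_contra hall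
          push_neg at hall
          exact hAVnm ((isMeagre_iUnion hall).mono hcover)
        obtain ⟨m, hm⟩ := hBmnm
        obtain ⟨x₀, hx₀⟩ := ddf_nonmeager_nonempty hm
        obtain ⟨U₀', hU₀'o, hU₀'ne, hU₀'nm⟩ := ddf_localize hm
        refine ⟨U₀', g m, Bm m, Y ∩ g m, hU₀'o, hU₀'ne, hb₁.isOpen (hgb m),
          hx₀.2.2.1, ?_, hU₀'nm, ?_, ?_, ?_⟩
        · exact fun x hx => hAX hx.1.1
        · intro y hy
          exact ⟨(hZX (hYZ hy.1)).1, hy.2⟩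
        · intro u hu
          rw [mem_closure_iff]
          intro N hNo huN
          have : u ∈ closure Y := hYd (hx₀.2.1 hu)
          rw [mem_closure_iff] at this
          obtain ⟨y, hy1, hy2⟩ := this (N ∩ g m) (hNo.inter (hb₁.isOpen (hgb m))) ⟨huN, hu⟩
          exact ⟨y, hy1.1, hy2, hy1.2⟩
        · intro x hx y hy
          have h1 : k ≤ (γ x y : ℕ) := hcol x hx.1.1 y (hYZ hy.1)
          have h2 : γ x y ≠ ⟨k, hk⟩ := hx.2.2.2 y hy
          have h3 : (γ x y : ℕ) ≠ k := fun h => h2 (Fin.ext h)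
          omega
    obtain ⟨U₀, U₁, A, Z, hU₀o, hU₀ne, hU₁o, hU₁ne, hAX, hAnm, hZX, hZd, hcol⟩ :=
      key r le_rfl
    obtain ⟨x, hx⟩ := ddf_nonmeager_nonempty (hAnm U₀ hU₀o subset_rfl hU₀ne)
    have hZne : Z.Nonempty := by
      obtain ⟨u, hu⟩ := hU₁ne
      have := hZd hu
      rcases Z.eq_empty_or_nonempty with h | h
      · rw [h, closure_empty] at this
        exact absurd this (notMem_empty u)
      · exact h
    obtain ⟨y, hy⟩ := hZne
    have := hcol x hx.1 y hy
    have := (γ x y).isLt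
    omega
  obtain ⟨j, U₀, U₁, A, Z, hU₀o, hU₀ne, hU₁o, hU₁ne, hAX, hZX, hZd, hsel⟩ := hgood
  -- basis of X₀, restricted to U₀
  obtain ⟨b₀, hb₀c, hb₀ne, hb₀⟩ := exists_countable_basis X₀
  have hSc : {t ∈ b₀ | t ⊆ U₀}.Countable := hb₀c.mono (sep_subset _ _)
  have hSne : {t ∈ b₀ | t ⊆ U₀}.Nonempty := by
    obtain ⟨p, hp⟩ := hU₀ne
    obtain ⟨t, htb, hpt, htU⟩ := hb₀.exists_subset_of_mem_open hp hU₀o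
    exact ⟨t, htb, htU⟩
  obtain ⟨f, hf⟩ := hSc.exists_eq_range hSne
  have hfb : ∀ n, f n ∈ b₀ ∧ f n ⊆ U₀ := fun n => (hf ▸ mem_range_self n : f n ∈ _)
  have hfne : ∀ n, (f n).Nonempty := fun n =>
    nonempty_iff_ne_empty.2 (fun h => hb₀ne (h ▸ (hfb n).1))
  -- selection function
  have hsel' : ∀ (n : ℕ) (Y : Set X₁), ∃ x : X₀, Y ⊆ Z → U₁ ⊆ closure Y →
      x ∈ A ∩ f n ∧ U₁ ⊆ closure {y ∈ Y | γ x y = j} := by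
    intro n Y
    by_cases h : Y ⊆ Z ∧ U₁ ⊆ closure Y
    · obtain ⟨x, hx1, hx2⟩ := hsel (f n) (hb₀.isOpen (hfb n).1) (hfne n) (hfb n).2 Y h.1 h.2
      exact ⟨x, fun _ _ => ⟨hx1, hx2⟩⟩
    · obtain ⟨p⟩ := ‹Nonempty X₀›
      exact ⟨p, fun h1 h2 => absurd ⟨h1, h2⟩ h⟩
  choose xf hxf using hsel'
  -- recursive sequence of sets
  let step : ℕ → Set X₁ → Set X₁ := fun m Ym => {y ∈ Ym | γ (xf m Ym) y = j}
  let Yseq : ℕ → Set X₁ := fun n => Nat.rec Z step n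
  have hY0 : Yseq 0 = Z := rfl
  have hYsucc : ∀ n, Yseq (n + 1) = step n (Yseq n) := fun n => rfl
  have hinv : ∀ n, Yseq n ⊆ Z ∧ U₁ ⊆ closure (Yseq n) := by
    intro n
    induction n with
    | zero => exact ⟨subset_rfl, hZd⟩
    | succ n ih =>
      have h := (hxf n (Yseq n) ih.1 ih.2).2
      rw [hYsucc n]
      exact ⟨fun y hy => ih.1 hy.1, h⟩
  refine ⟨j, U₀, U₁, fun n => xf n (Yseq n), Yseq, hU₀o, hU₀ne, hU₁o, hU₁ne, ?_, ?_, ?_, ?_,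
    fun n => (hinv n).2, ?_⟩
  · intro n
    have hx := (hxf n (Yseq n) (hinv n).1 (hinv n).2).1
    exact ⟨hAX hx.1, (hfb n).2 hx.2⟩
  · intro u hu
    rw [mem_closure_iff]
    intro N hNo huN
    obtain ⟨t, htb, hut, htNU⟩ :=
      hb₀.exists_subset_of_mem_open (⟨huN, hu⟩ : u ∈ N ∩ U₀) (hNo.inter hU₀o)
    obtain ⟨n, hn⟩ : ∃ n, f n = t := by
      have : t ∈ range f := hf ▸ ⟨htb, htNU.trans inter_subset_right⟩
      exact this
    have hx := (hxf n (Yseq n) (hinv n).1 (hinv n).2).1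
    exact ⟨xf n (Yseq n), (htNU (hn ▸ hx.2)).1, mem_range_self n⟩
  · intro n
    exact (hinv n).1.trans hZX
  · intro n
    rw [hYsucc n]
    exact fun y hy => hy.1
  · intro n y hy
    rw [hYsucc n] at hy
    exact hy.2
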